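/- Let μ be the self-similar measure generated by the 2ℓ maps S_i. For every ℓ-adic interval I, at least one of the following holds: (i) μ(I)μ(J) ≤ 2 μ(IJ) for all ℓ-adic intervals J; or (ii) μ(I) μ(T(J)) ≤ 2 μ(IJ) for all ℓ-adic intervals J, where T(x) = 1 − x and IJ denotes the concatenated interval I ∩ σ^{−n}(J) with n the generation of I. -/

import Mathlib

open MeasureTheory Filter Topology ENNReal

noncomputable section

/-- The ℓ-adic interval of generation `n` with index `k`. -/
def adicI (ℓ n k : ℕ) : Set ℝ := Set.Ico ((k : ℝ) / ℓ ^ n) ((k + 1 : ℝ) / ℓ ^ n)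

/-- The mass of a set for a measure, as a real number. -/
def mss (μ : Measure ℝ) (s : Set ℝ) : ℝ := (μ s).toReal

/-- The `2ℓ` similitudes of ratio `±1/ℓ`. -/
def simMapT (ℓ i : ℕ) (x : ℝ) : ℝ :=
  if i < ℓ then x / ℓ + i / ℓ else -x / ℓ + ((i - ℓ + 1 : ℕ) : ℝ) / ℓ

/-- The reflection `T(x) = 1 - x`. -/
def refl1 (x : ℝ) : ℝ := 1 - x

/-- The measure `ν = (μ + μ ∘ T)/2`. -/
def nuT (μ : Measure ℝ) : Measure ℝ := (2 : ℝ≥0∞)⁻¹ • (μ + μ.map refl1)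

/-- Partition-function sequence `u_n = ∑_{I ∈ F_n, m(I) ≠ 0} m(I)^q`. -/
def uSeq (ℓ : ℕ) (μ : Measure ℝ) (q : ℝ) (n : ℕ) : ℝ :=
  ∑ k ∈ (Finset.range (ℓ ^ n)).filter (fun k => mss μ (adicI ℓ n k) ≠ 0),
    mss μ (adicI ℓ n k) ^ q

/-- The `L^q`-spectrum `τ(q)` of a measure, defined with a `limsup`. -/
def Lsp (ℓ : ℕ) (μ : Measure ℝ) (q : ℝ) : ℝ :=
  limsup (fun n : ℕ => Real.log (uSeq ℓ μ q n) / (n * Real.log ℓ)) atTop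

/-- `‖M‖₁`: the sum of the first-row entries. -/
def normOne (M : Matrix (Fin 2) (Fin 2) ℝ) : ℝ := M 0 0 + M 0 1

/-- `‖M‖`: half of the sum of all entries. -/
def normH2 (M : Matrix (Fin 2) (Fin 2) ℝ) : ℝ := (M 0 0 + M 0 1 + M 1 0 + M 1 1) / 2

/-- The matrix `M_ε`. -/
def MmatT (ℓ : ℕ) (p : ℕ → ℝ) (ε : ℕ) : Matrix (Fin 2) (Fin 2) ℝ :=
  !![p ε, p (ε + ℓ); p (2 * ℓ - 1 - ε), p (ℓ - 1 - ε)]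

/-- The ℓ-adic interval `I_{ε₁⋯ε_n}` associated with a word. -/
def wordI (ℓ n : ℕ) (ε : Fin n → ℕ) : Set ℝ :=
  Set.Ico (∑ i : Fin n, (ε i : ℝ) / ℓ ^ ((i : ℕ) + 1))
    (∑ i : Fin n, (ε i : ℝ) / ℓ ^ ((i : ℕ) + 1) + 1 / ℓ ^ n)

/-- The ℓ-adic shift `σ(x) = ℓx (mod 1)`. -/
def shiftM (ℓ : ℕ) (x : ℝ) : ℝ := Int.fract (ℓ * x)

/-- `I_n(x)`: the ℓ-adic interval of generation `n` containing `x`. -/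
def Iofx (ℓ n : ℕ) (x : ℝ) : Set ℝ := adicI ℓ n (⌊(ℓ : ℝ) ^ n * x⌋).toNat

/-- The level set `E_α(m)` of points of `[0,1)` with local dimension `α`. -/
def ESet (ℓ : ℕ) (μ : Measure ℝ) (α : ℝ) : Set ℝ :=
  {x ∈ Set.Ico (0 : ℝ) 1 |
    Tendsto (fun n : ℕ => -Real.log (mss μ (Iofx ℓ n x)) / (n * Real.log ℓ)) atTop (𝓝 α)}

namespace Stmt7Aux

variable {ℓ : ℕ} {p : ℕ → ℝ} {μ : Measure ℝ}

lemma measurable_simMapT (ℓ i : ℕ) : Measurable (simMapT ℓ i) := by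
  unfold simMapT; split_ifs <;> fun_prop

variable {ℓ : ℕ} {p : ℕ → ℝ} {μ : Measure ℝ}

lemma selfsim_apply
    (hself : μ = ∑ i ∈ Finset.range (2 * ℓ), ENNReal.ofReal (p i) • μ.map (simMapT ℓ i))
    {s : Set ℝ} (hs : MeasurableSet s) :
    μ s = ∑ i ∈ Finset.range (2 * ℓ), ENNReal.ofReal (p i) * μ (simMapT ℓ i ⁻¹' s) := by
  conv_lhs => rw [hself]
  rw [Measure.finset_sum_apply]
  refine Finset.sum_congr rfl fun i _ => ?_
  rw [Measure.smul_apply, Measure.map_apply (measurable_simMapT ℓ i) hs, smul_eq_mul]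

lemma sum_ofReal_p (hp : ∀ i, 0 ≤ p i)
    (hsum : ∑ i ∈ Finset.range (2 * ℓ), p i = 1) :
    ∑ i ∈ Finset.range (2 * ℓ), ENNReal.ofReal (p i) = 1 := by
  rw [← ENNReal.ofReal_sum_of_nonneg fun i _ => hp i, hsum, ENNReal.ofReal_one]

-- preimage formulas
lemma pre_Ico_lt {i : ℕ} (hℓ : 0 < ℓ) (hi : i < ℓ) (u v : ℝ) :
    simMapT ℓ i ⁻¹' Set.Ico u v = Set.Ico (ℓ * u - i) (ℓ * v - i) := by
  have hL : (0:ℝ) < ℓ := by exact_mod_cast hℓ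
  ext x
  simp only [Set.mem_preimage, simMapT, if_pos hi, Set.mem_Ico, ← add_div,
    le_div_iff₀ hL, div_lt_iff₀ hL]
  constructor <;> rintro ⟨h1, h2⟩ <;> constructor <;> nlinarith

lemma pre_Ioc_lt {i : ℕ} (hℓ : 0 < ℓ) (hi : i < ℓ) (u v : ℝ) :
    simMapT ℓ i ⁻¹' Set.Ioc u v = Set.Ioc (ℓ * u - i) (ℓ * v - i) := by
  have hL : (0:ℝ) < ℓ := by exact_mod_cast hℓ
  ext x
  simp only [Set.mem_preimage, simMapT, if_pos hi, Set.mem_Ioc, ← add_div,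
    lt_div_iff₀ hL, div_le_iff₀ hL]
  constructor <;> rintro ⟨h1, h2⟩ <;> constructor <;> nlinarith

lemma pre_Ico_ge (hℓ : 0 < ℓ) (j : ℕ) (u v : ℝ) :
    simMapT ℓ (ℓ + j) ⁻¹' Set.Ico u v = Set.Ioc ((j:ℝ) + 1 - ℓ * v) ((j:ℝ) + 1 - ℓ * u) := by
  have hL : (0:ℝ) < ℓ := by exact_mod_cast hℓ
  have hni : ¬ (ℓ + j < ℓ) := by omega
  have hc : ((ℓ + j - ℓ + 1 : ℕ) : ℝ) = (j:ℝ) + 1 := by push_cast [Nat.add_sub_cancel_left]; ring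
  ext x
  simp only [Set.mem_preimage, simMapT, if_neg hni, hc, Set.mem_Ico, Set.mem_Ioc,
    ← add_div, le_div_iff₀ hL, div_lt_iff₀ hL]
  constructor <;> rintro ⟨h1, h2⟩ <;> constructor <;> nlinarith

lemma pre_Ioc_ge (hℓ : 0 < ℓ) (j : ℕ) (u v : ℝ) :
    simMapT ℓ (ℓ + j) ⁻¹' Set.Ioc u v = Set.Ico ((j:ℝ) + 1 - ℓ * v) ((j:ℝ) + 1 - ℓ * u) := by
  have hL : (0:ℝ) < ℓ := by exact_mod_cast hℓ
  have hni : ¬ (ℓ + j < ℓ) := by omega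
  have hc : ((ℓ + j - ℓ + 1 : ℕ) : ℝ) = (j:ℝ) + 1 := by push_cast [Nat.add_sub_cancel_left]; ring
  ext x
  simp only [Set.mem_preimage, simMapT, if_neg hni, hc, Set.mem_Ico, Set.mem_Ioc,
    ← add_div, lt_div_iff₀ hL, div_le_iff₀ hL]
  constructor <;> rintro ⟨h1, h2⟩ <;> constructor <;> nlinarith


lemma supp01 (hℓ : 2 ≤ ℓ) (hp : ∀ i, 0 ≤ p i)
    (hsum : ∑ i ∈ Finset.range (2 * ℓ), p i = 1) [IsProbabilityMeasure μ]
    (hself : μ = ∑ i ∈ Finset.range (2 * ℓ), ENNReal.ofReal (p i) • μ.map (simMapT ℓ i)) :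
    μ (Set.Icc (0:ℝ) 1)ᶜ = 0 := by
  have hL : (2:ℝ) ≤ (ℓ:ℝ) := by exact_mod_cast hℓ
  -- one-step estimate
  have step : ∀ R : ℝ, 0 ≤ R →
      μ (Set.Icc (-R) (1+R))ᶜ ≤ μ (Set.Icc (-((ℓ:ℝ)*R)) (1+(ℓ:ℝ)*R))ᶜ := by
    intro R hR
    rw [selfsim_apply hself measurableSet_Icc.compl]
    calc ∑ i ∈ Finset.range (2 * ℓ), ENNReal.ofReal (p i) * μ (simMapT ℓ i ⁻¹' (Set.Icc (-R) (1+R))ᶜ)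
        ≤ ∑ i ∈ Finset.range (2 * ℓ), ENNReal.ofReal (p i) * μ (Set.Icc (-((ℓ:ℝ)*R)) (1+(ℓ:ℝ)*R))ᶜ := by
          refine Finset.sum_le_sum fun i hi => ?_
          refine mul_le_mul_right (measure_mono ?_) _
          intro x hx
          simp only [Set.mem_preimage, Set.mem_compl_iff, Set.mem_Icc, not_and_or, not_le] at hx ⊢
          by_contra hcon
          push_neg at hcon
          obtain ⟨h1, h2⟩ := hcon
          have hi2 : i < 2 * ℓ := Finset.mem_range.mp hi
          have : simMapT ℓ i x ∈ Set.Icc (-R) (1+R) := by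
            unfold simMapT
            split_ifs with h
            · have hiℝ : (i:ℝ) ≤ (ℓ:ℝ) - 1 := by
                have : (i:ℝ) + 1 ≤ (ℓ:ℝ) := by exact_mod_cast h
                linarith
              have hi0 : (0:ℝ) ≤ i := Nat.cast_nonneg i
              rw [Set.mem_Icc, ← add_div, le_div_iff₀ (by linarith),
                div_le_iff₀ (by linarith : (0:ℝ) < (ℓ:ℝ))]
              constructor <;> nlinarith
            · push_neg at h
              have hc : ((i - ℓ + 1 : ℕ) : ℝ) = (i:ℝ) - (ℓ:ℝ) + 1 := by
                push_cast [Nat.cast_sub h]; ring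
              have hj1 : (1:ℝ) ≤ (i:ℝ) - (ℓ:ℝ) + 1 := by
                have : (ℓ:ℝ) ≤ (i:ℝ) := by exact_mod_cast h
                linarith
              have hj2 : (i:ℝ) - (ℓ:ℝ) + 1 ≤ (ℓ:ℝ) := by
                have : (i:ℝ) + 1 ≤ 2*(ℓ:ℝ) := by exact_mod_cast hi2
                linarith
              rw [hc, Set.mem_Icc, ← add_div, le_div_iff₀ (by linarith),
                div_le_iff₀ (by linarith : (0:ℝ) < (ℓ:ℝ))]
              constructor <;> nlinarith
          rw [Set.mem_Icc] at this
          rcases hx with h | h <;> linarith [this.1, this.2]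
      _ = μ (Set.Icc (-((ℓ:ℝ)*R)) (1+(ℓ:ℝ)*R))ᶜ := by
          rw [← Finset.sum_mul, sum_ofReal_p hp hsum, one_mul]
  -- iterate
  have iter : ∀ δ : ℝ, 0 < δ → ∀ n : ℕ,
      μ (Set.Icc (-δ) (1+δ))ᶜ ≤ μ (Set.Icc (-((ℓ:ℝ)^n * δ)) (1+(ℓ:ℝ)^n * δ))ᶜ := by
    intro δ hδ n
    induction n with
    | zero => simp
    | succ n ih =>
      refine ih.trans ?_
      have := step ((ℓ:ℝ)^n * δ) (by positivity)
      have he : (ℓ:ℝ) * ((ℓ:ℝ)^n * δ) = (ℓ:ℝ)^(n+1) * δ := by ring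
      rwa [he] at this
  -- limit is zero
  have hzero : ∀ δ : ℝ, 0 < δ → μ (Set.Icc (-δ) (1+δ))ᶜ = 0 := by
    intro δ hδ
    set s : ℕ → Set ℝ := fun n => (Set.Icc (-((ℓ:ℝ)^n * δ)) (1+(ℓ:ℝ)^n * δ))ᶜ with hs
    have hanti : Antitone s := by
      intro a b hab
      refine Set.compl_subset_compl.mpr (Set.Icc_subset_Icc ?_ ?_)
      · have : (ℓ:ℝ)^a * δ ≤ (ℓ:ℝ)^b * δ := by
          have := pow_le_pow_right₀ (by linarith : (1:ℝ) ≤ ℓ) hab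
          nlinarith
        linarith
      · have : (ℓ:ℝ)^a * δ ≤ (ℓ:ℝ)^b * δ := by
          have := pow_le_pow_right₀ (by linarith : (1:ℝ) ≤ ℓ) hab
          nlinarith
        linarith
    have hinter : ⋂ n, s n = ∅ := by
      ext x
      simp only [Set.mem_iInter, Set.mem_empty_iff_false, iff_false, not_forall]
      obtain ⟨n, hn⟩ := pow_unbounded_of_one_lt ((|x|+1)/δ) (by linarith : (1:ℝ) < (ℓ:ℝ))
      refine ⟨n, ?_⟩
      simp only [hs, Set.notMem_compl_iff, Set.mem_Icc]
      have habs : |x| + 1 < (ℓ:ℝ)^n * δ := by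
        rw [div_lt_iff₀ hδ] at hn; linarith
      have h1 := neg_abs_le x
      have h2 := le_abs_self x
      constructor <;> linarith
    have htend := tendsto_measure_iInter_atTop (μ := μ)
      (fun n => (measurableSet_Icc.compl).nullMeasurableSet) hanti ⟨0, measure_ne_top μ _⟩
    rw [hinter, measure_empty] at htend
    have hle : ∀ n, μ (Set.Icc (-δ) (1+δ))ᶜ ≤ (μ ∘ s) n := by
      intro n; exact iter δ hδ n
    exact le_antisymm (ge_of_tendsto' htend hle) (by simp)
  -- cover the complement of [0,1]
  have hcover : (Set.Icc (0:ℝ) 1)ᶜ ⊆ ⋃ n : ℕ, (Set.Icc (-(1/((n:ℝ)+1))) (1+1/((n:ℝ)+1)))ᶜ := by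
    intro x hx
    simp only [Set.mem_compl_iff, Set.mem_Icc, not_and_or, not_le] at hx
    rcases hx with h | h
    · obtain ⟨n, hn⟩ := exists_nat_one_div_lt (show (0:ℝ) < -x by linarith)
      refine Set.mem_iUnion.mpr ⟨n, ?_⟩
      simp only [Set.mem_compl_iff, Set.mem_Icc, not_and_or, not_le]
      left; linarith
    · obtain ⟨n, hn⟩ := exists_nat_one_div_lt (show (0:ℝ) < x - 1 by linarith)
      refine Set.mem_iUnion.mpr ⟨n, ?_⟩
      simp only [Set.mem_compl_iff, Set.mem_Icc, not_and_or, not_le]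
      right; linarith
  exact measure_mono_null hcover (measure_iUnion_null fun n => hzero _ (by positivity))

lemma pre_singleton_lt {i : ℕ} (hℓ : 0 < ℓ) (hi : i < ℓ) (y : ℝ) :
    simMapT ℓ i ⁻¹' {y} = {(ℓ:ℝ) * y - i} := by
  have hL : (0:ℝ) < ℓ := by exact_mod_cast hℓ
  ext x
  simp only [Set.mem_preimage, simMapT, if_pos hi, Set.mem_singleton_iff, ← add_div,
    div_eq_iff hL.ne']
  constructor <;> intro h <;> nlinarith

lemma pre_singleton_ge (hℓ : 0 < ℓ) (j : ℕ) (y : ℝ) :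
    simMapT ℓ (ℓ + j) ⁻¹' {y} = {(j:ℝ) + 1 - (ℓ:ℝ) * y} := by
  have hL : (0:ℝ) < ℓ := by exact_mod_cast hℓ
  have hni : ¬ (ℓ + j < ℓ) := by omega
  have hc : ((ℓ + j - ℓ + 1 : ℕ) : ℝ) = (j:ℝ) + 1 := by push_cast [Nat.add_sub_cancel_left]; ring
  ext x
  simp only [Set.mem_preimage, simMapT, if_neg hni, hc, Set.mem_singleton_iff, ← add_div,
    div_eq_iff hL.ne']
  constructor <;> intro h <;> nlinarith

lemma sum_two {f : ℕ → ℝ≥0∞} (ε : ℕ) (hε : ε < ℓ)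
    (hz : ∀ i < 2 * ℓ, i ≠ ε → i ≠ ε + ℓ → f i = 0) :
    ∑ i ∈ Finset.range (2 * ℓ), f i = f ε + f (ε + ℓ) := by
  have hsub : ({ε, ε + ℓ} : Finset ℕ) ⊆ Finset.range (2 * ℓ) := by
    intro i hi
    simp only [Finset.mem_insert, Finset.mem_singleton] at hi
    simp only [Finset.mem_range]
    omega
  rw [← Finset.sum_subset hsub (fun i hi hni => by
    simp only [Finset.mem_insert, Finset.mem_singleton, not_or] at hni
    exact hz i (Finset.mem_range.mp hi) hni.1 hni.2)]
  rw [Finset.sum_pair (by omega : ε ≠ ε + ℓ)]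

lemma null_singleton_outside (hc : μ (Set.Icc (0:ℝ) 1)ᶜ = 0) {y : ℝ} (hy : y < 0 ∨ 1 < y) :
    μ {y} = 0 := by
  refine measure_mono_null ?_ hc
  intro x hx
  simp only [Set.mem_singleton_iff] at hx
  subst hx
  simp only [Set.mem_compl_iff, Set.mem_Icc, not_and_or, not_le]
  exact hy

lemma atoms (hℓ : 2 ≤ ℓ) (hp : ∀ i, 0 ≤ p i)
    (hsum : ∑ i ∈ Finset.range (2 * ℓ), p i = 1)
    (hpos : ∀ i < ℓ, 0 < p i + p (i + ℓ))
    [IsProbabilityMeasure μ]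
    (hself : μ = ∑ i ∈ Finset.range (2 * ℓ), ENNReal.ofReal (p i) • μ.map (simMapT ℓ i))
    (hc : μ (Set.Icc (0:ℝ) 1)ᶜ = 0) :
    μ {(0:ℝ)} = 0 ∧ μ {(1:ℝ)} = 0 := by
  have hℓ0 : 0 < ℓ := by omega
  have hL1 : (1:ℝ) ≤ (ℓ:ℝ) := by exact_mod_cast hℓ0
  -- equation for μ{0}
  have key0 : μ {(0:ℝ)} = ENNReal.ofReal (p 0) * μ {(0:ℝ)} + ENNReal.ofReal (p ℓ) * μ {(1:ℝ)} := by
    have hz : ∀ i < 2 * ℓ, i ≠ 0 → i ≠ 0 + ℓ →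
        ENNReal.ofReal (p i) * μ (simMapT ℓ i ⁻¹' {(0:ℝ)}) = 0 := by
      intro i hi2 hne1 hne2
      rw [mul_eq_zero]; right
      rcases lt_or_ge i ℓ with h | h
      · rw [pre_singleton_lt hℓ0 h 0]
        refine null_singleton_outside hc ?_
        left
        have : (1:ℝ) ≤ (i:ℝ) := by exact_mod_cast (by omega : 1 ≤ i)
        nlinarith
      · obtain ⟨j, rfl⟩ : ∃ j, i = ℓ + j := ⟨i - ℓ, by omega⟩
        rw [pre_singleton_ge hℓ0 j 0]
        refine null_singleton_outside hc ?_
        right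
        have : (1:ℝ) ≤ (j:ℝ) := by exact_mod_cast (by omega : 1 ≤ j)
        nlinarith
    have e1 : simMapT ℓ 0 ⁻¹' {(0:ℝ)} = {(0:ℝ)} := by
      rw [pre_singleton_lt hℓ0 hℓ0 0]; norm_num
    have e2 : simMapT ℓ (0 + ℓ) ⁻¹' {(0:ℝ)} = {(1:ℝ)} := by
      rw [show 0 + ℓ = ℓ + 0 by omega, pre_singleton_ge hℓ0 0 0]; norm_num
    conv_lhs => rw [selfsim_apply hself (measurableSet_singleton _)]
    rw [sum_two 0 hℓ0 hz, e1, e2, show 0 + ℓ = ℓ by omega]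
  -- equation for μ{1}
  have key1 : μ {(1:ℝ)} = ENNReal.ofReal (p (ℓ-1)) * μ {(1:ℝ)}
      + ENNReal.ofReal (p (ℓ-1+ℓ)) * μ {(0:ℝ)} := by
    have hz : ∀ i < 2 * ℓ, i ≠ ℓ - 1 → i ≠ ℓ - 1 + ℓ →
        ENNReal.ofReal (p i) * μ (simMapT ℓ i ⁻¹' {(1:ℝ)}) = 0 := by
      intro i hi2 hne1 hne2
      rw [mul_eq_zero]; right
      rcases lt_or_ge i ℓ with h | h
      · rw [pre_singleton_lt hℓ0 h 1]
        refine null_singleton_outside hc ?_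
        right
        have : (i:ℝ) + 2 ≤ (ℓ:ℝ) := by exact_mod_cast (by omega : i + 2 ≤ ℓ)
        nlinarith
      · obtain ⟨j, rfl⟩ : ∃ j, i = ℓ + j := ⟨i - ℓ, by omega⟩
        rw [pre_singleton_ge hℓ0 j 1]
        refine null_singleton_outside hc ?_
        left
        have : (j:ℝ) + 2 ≤ (ℓ:ℝ) := by exact_mod_cast (by omega : j + 2 ≤ ℓ)
        nlinarith
    have e1 : simMapT ℓ (ℓ-1) ⁻¹' {(1:ℝ)} = {(1:ℝ)} := by
      rw [pre_singleton_lt hℓ0 (by omega) 1, Nat.cast_sub (by omega : 1 ≤ ℓ)]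
      norm_num
    have e2 : simMapT ℓ (ℓ-1+ℓ) ⁻¹' {(1:ℝ)} = {(0:ℝ)} := by
      rw [show ℓ - 1 + ℓ = ℓ + (ℓ-1) by omega, pre_singleton_ge hℓ0 (ℓ-1) 1,
        Nat.cast_sub (by omega : 1 ≤ ℓ)]
      norm_num
    conv_lhs => rw [selfsim_apply hself (measurableSet_singleton _)]
    rw [sum_two (ℓ-1) (by omega) hz, e1, e2]
  -- pass to reals
  set u := (μ {(0:ℝ)}).toReal with hu_def
  set v := (μ {(1:ℝ)}).toReal with hv_def
  have hu0 : 0 ≤ u := ENNReal.toReal_nonneg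
  have hv0 : 0 ≤ v := ENNReal.toReal_nonneg
  have hfin : ∀ (c : ℝ) (s : Set ℝ), ENNReal.ofReal c * μ s ≠ ⊤ :=
    fun c s => ENNReal.mul_ne_top ENNReal.ofReal_ne_top (measure_ne_top μ s)
  have hu : u = p 0 * u + p ℓ * v := by
    rw [hu_def]
    conv_lhs => rw [key0]
    rw [ENNReal.toReal_add (hfin _ _) (hfin _ _), ENNReal.toReal_mul, ENNReal.toReal_mul,
      ENNReal.toReal_ofReal (hp _), ENNReal.toReal_ofReal (hp _)]
  have hv : v = p (ℓ-1) * v + p (ℓ-1+ℓ) * u := by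
    rw [hv_def]
    conv_lhs => rw [key1]
    rw [ENNReal.toReal_add (hfin _ _) (hfin _ _), ENNReal.toReal_mul, ENNReal.toReal_mul,
      ENNReal.toReal_ofReal (hp _), ENNReal.toReal_ofReal (hp _)]
  have hs1 : 0 < p 0 + p ℓ := by have := hpos 0 (by omega); simpa using this
  have hs2 : 0 < p (ℓ-1) + p (ℓ-1+ℓ) := hpos (ℓ-1) (by omega)
  have hsum4 : p 0 + (p (ℓ-1) + (p ℓ + p (ℓ-1+ℓ))) ≤ 1 := by
    have hsubset : ({0, ℓ-1, ℓ, ℓ-1+ℓ} : Finset ℕ) ⊆ Finset.range (2*ℓ) := by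
      intro i hi
      simp only [Finset.mem_insert, Finset.mem_singleton] at hi
      simp only [Finset.mem_range]
      omega
    calc p 0 + (p (ℓ-1) + (p ℓ + p (ℓ-1+ℓ)))
        = ∑ i ∈ ({0, ℓ-1, ℓ, ℓ-1+ℓ} : Finset ℕ), p i := by
          rw [Finset.sum_insert (by simp; omega), Finset.sum_insert (by simp; omega),
            Finset.sum_insert (by simp; omega), Finset.sum_singleton]
      _ ≤ ∑ i ∈ Finset.range (2*ℓ), p i :=
          Finset.sum_le_sum_of_subset_of_nonneg hsubset (fun i _ _ => hp i)
      _ = 1 := hsum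
  -- conclude u = v = 0
  have hM0 : max u v ≤ 0 := by
    rcases max_cases u v with ⟨hm, hge⟩ | ⟨hm, hge⟩
    · rw [hm]
      nlinarith [hp 0, hp ℓ, hp (ℓ-1), hp (ℓ-1+ℓ), mul_nonneg (hp ℓ) (sub_nonneg.mpr hge),
        mul_nonneg (le_of_lt hs2) hu0]
    · rw [hm]
      nlinarith [hp 0, hp ℓ, hp (ℓ-1), hp (ℓ-1+ℓ), mul_nonneg (hp (ℓ-1+ℓ)) (sub_nonneg.mpr hge.le),
        mul_nonneg (le_of_lt hs1) hv0]
  have hu' : u = 0 := le_antisymm ((le_max_left u v).trans hM0) hu0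
  have hv' : v = 0 := le_antisymm ((le_max_right u v).trans hM0) hv0
  constructor
  · rw [← ENNReal.ofReal_toReal (measure_ne_top μ _), ← hu_def, hu', ENNReal.ofReal_zero]
  · rw [← ENNReal.ofReal_toReal (measure_ne_top μ _), ← hv_def, hv', ENNReal.ofReal_zero]

lemma nullsub (h0 : μ {(0:ℝ)} = 0) (h1 : μ {(1:ℝ)} = 0) (hc : μ (Set.Icc (0:ℝ) 1)ᶜ = 0)
    {s : Set ℝ} (h : s ∩ Set.Icc 0 1 ⊆ {0, 1}) : μ s = 0 := by
  have hsub : s ⊆ ({0, 1} : Set ℝ) ∪ (Set.Icc (0:ℝ) 1)ᶜ := by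
    intro x hx
    by_cases hxi : x ∈ Set.Icc (0:ℝ) 1
    · exact Or.inl (h ⟨hx, hxi⟩)
    · exact Or.inr hxi
  refine measure_mono_null hsub (measure_union_null ?_ hc)
  rw [Set.insert_eq]
  exact measure_union_null h0 h1

lemma stepA (hℓ0 : 0 < ℓ)
    (hself : μ = ∑ i ∈ Finset.range (2 * ℓ), ENNReal.ofReal (p i) • μ.map (simMapT ℓ i))
    (h0 : μ {(0:ℝ)} = 0) (h1 : μ {(1:ℝ)} = 0) (hc : μ (Set.Icc (0:ℝ) 1)ᶜ = 0)
    {ε : ℕ} (hε : ε < ℓ) {u v : ℝ} (hu : 0 ≤ u) (hv : v ≤ 1) :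
    μ (Set.Ico (((ε:ℝ)+u)/ℓ) (((ε:ℝ)+v)/ℓ)) =
      ENNReal.ofReal (p ε) * μ (Set.Ico u v)
        + ENNReal.ofReal (p (ε+ℓ)) * μ (Set.Ioc (1-v) (1-u)) ∧
    μ (Set.Ioc (((ε:ℝ)+u)/ℓ) (((ε:ℝ)+v)/ℓ)) =
      ENNReal.ofReal (p ε) * μ (Set.Ioc u v)
        + ENNReal.ofReal (p (ε+ℓ)) * μ (Set.Ico (1-v) (1-u)) := by
  have hL : (0:ℝ) < ℓ := by exact_mod_cast hℓ0
  have hm : ∀ t : ℝ, (ℓ:ℝ) * (((ε:ℝ)+t)/ℓ) = (ε:ℝ) + t := fun t => mul_div_cancel₀ _ hL.ne'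
  constructor
  · -- Ico version
    have hz : ∀ i < 2 * ℓ, i ≠ ε → i ≠ ε + ℓ →
        ENNReal.ofReal (p i) * μ (simMapT ℓ i ⁻¹' Set.Ico (((ε:ℝ)+u)/ℓ) (((ε:ℝ)+v)/ℓ)) = 0 := by
      intro i hi2 hne1 hne2
      rw [mul_eq_zero]; right
      rcases lt_or_ge i ℓ with h | h
      · rw [pre_Ico_lt hℓ0 h, hm, hm]
        refine nullsub h0 h1 hc ?_
        rintro x ⟨⟨hx1, hx2⟩, hx3, hx4⟩
        rcases lt_or_gt_of_ne hne1 with hlt | hgt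
        · -- i < ε : x = 1
          have hie : (i:ℝ) + 1 ≤ (ε:ℝ) := by exact_mod_cast hlt
          simp only [Set.mem_insert_iff, Set.mem_singleton_iff]
          right; linarith
        · have hie : (ε:ℝ) + 1 ≤ (i:ℝ) := by exact_mod_cast hgt
          exfalso; linarith
      · obtain ⟨j, rfl⟩ : ∃ j, i = ℓ + j := ⟨i - ℓ, by omega⟩
        have hjε : j ≠ ε := by omega
        rw [pre_Ico_ge hℓ0 j, hm, hm]
        refine nullsub h0 h1 hc ?_
        rintro x ⟨⟨hx1, hx2⟩, hx3, hx4⟩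
        rcases lt_or_gt_of_ne hjε with hlt | hgt
        · have hie : (j:ℝ) + 1 ≤ (ε:ℝ) := by exact_mod_cast hlt
          simp only [Set.mem_insert_iff, Set.mem_singleton_iff]
          left; linarith
        · have hie : (ε:ℝ) + 1 ≤ (j:ℝ) := by exact_mod_cast hgt
          exfalso; linarith
    have e1 : simMapT ℓ ε ⁻¹' Set.Ico (((ε:ℝ)+u)/ℓ) (((ε:ℝ)+v)/ℓ) = Set.Ico u v := by
      rw [pre_Ico_lt hℓ0 hε, hm, hm]
      congr 1 <;> ring
    have e2 : simMapT ℓ (ε+ℓ) ⁻¹' Set.Ico (((ε:ℝ)+u)/ℓ) (((ε:ℝ)+v)/ℓ) = Set.Ioc (1-v) (1-u) := by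
      rw [show ε + ℓ = ℓ + ε by omega, pre_Ico_ge hℓ0 ε, hm, hm]
      congr 1 <;> ring
    conv_lhs => rw [selfsim_apply hself measurableSet_Ico]
    rw [sum_two ε hε hz, e1, e2]
  · -- Ioc version
    have hz : ∀ i < 2 * ℓ, i ≠ ε → i ≠ ε + ℓ →
        ENNReal.ofReal (p i) * μ (simMapT ℓ i ⁻¹' Set.Ioc (((ε:ℝ)+u)/ℓ) (((ε:ℝ)+v)/ℓ)) = 0 := by
      intro i hi2 hne1 hne2
      rw [mul_eq_zero]; right
      rcases lt_or_ge i ℓ with h | h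
      · rw [pre_Ioc_lt hℓ0 h, hm, hm]
        refine nullsub h0 h1 hc ?_
        rintro x ⟨⟨hx1, hx2⟩, hx3, hx4⟩
        rcases lt_or_gt_of_ne hne1 with hlt | hgt
        · have hie : (i:ℝ) + 1 ≤ (ε:ℝ) := by exact_mod_cast hlt
          exfalso; linarith
        · have hie : (ε:ℝ) + 1 ≤ (i:ℝ) := by exact_mod_cast hgt
          simp only [Set.mem_insert_iff, Set.mem_singleton_iff]
          left; linarith
      · obtain ⟨j, rfl⟩ : ∃ j, i = ℓ + j := ⟨i - ℓ, by omega⟩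
        have hjε : j ≠ ε := by omega
        rw [pre_Ioc_ge hℓ0 j, hm, hm]
        refine nullsub h0 h1 hc ?_
        rintro x ⟨⟨hx1, hx2⟩, hx3, hx4⟩
        rcases lt_or_gt_of_ne hjε with hlt | hgt
        · have hie : (j:ℝ) + 1 ≤ (ε:ℝ) := by exact_mod_cast hlt
          exfalso; linarith
        · have hie : (ε:ℝ) + 1 ≤ (j:ℝ) := by exact_mod_cast hgt
          simp only [Set.mem_insert_iff, Set.mem_singleton_iff]
          right; linarith
    have e1 : simMapT ℓ ε ⁻¹' Set.Ioc (((ε:ℝ)+u)/ℓ) (((ε:ℝ)+v)/ℓ) = Set.Ioc u v := by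
      rw [pre_Ioc_lt hℓ0 hε, hm, hm]
      congr 1 <;> ring
    have e2 : simMapT ℓ (ε+ℓ) ⁻¹' Set.Ioc (((ε:ℝ)+u)/ℓ) (((ε:ℝ)+v)/ℓ) = Set.Ico (1-v) (1-u) := by
      rw [show ε + ℓ = ℓ + ε by omega, pre_Ioc_ge hℓ0 ε, hm, hm]
      congr 1 <;> ring
    conv_lhs => rw [selfsim_apply hself measurableSet_Ioc]
    rw [sum_two ε hε hz, e1, e2]

lemma mainInd (hℓ0 : 0 < ℓ) (hp : ∀ i, 0 ≤ p i)
    (hself : μ = ∑ i ∈ Finset.range (2 * ℓ), ENNReal.ofReal (p i) • μ.map (simMapT ℓ i))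
    (h0 : μ {(0:ℝ)} = 0) (h1 : μ {(1:ℝ)} = 0) (hc : μ (Set.Icc (0:ℝ) 1)ᶜ = 0) :
    ∀ n : ℕ, ∀ k : ℕ, k < ℓ ^ n → ∃ a b : ℝ, 0 ≤ a ∧ 0 ≤ b ∧
      ∀ c d : ℝ, 0 ≤ c → d ≤ 1 →
        (μ (Set.Ico (((k:ℝ)+c)/ℓ^n) (((k:ℝ)+d)/ℓ^n)) =
            ENNReal.ofReal a * μ (Set.Ico c d) + ENNReal.ofReal b * μ (Set.Ioc (1-d) (1-c)) ∧
         μ (Set.Ioc (((k:ℝ)+c)/ℓ^n) (((k:ℝ)+d)/ℓ^n)) =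
            ENNReal.ofReal a * μ (Set.Ioc c d) + ENNReal.ofReal b * μ (Set.Ico (1-d) (1-c))) := by
  have hL : (0:ℝ) < ℓ := by exact_mod_cast hℓ0
  intro n
  induction n with
  | zero =>
    intro k hk
    have hk0 : k = 0 := by simpa [Nat.lt_one_iff] using hk
    subst hk0
    refine ⟨1, 0, zero_le_one, le_refl 0, fun c d hcp hd => ?_⟩
    norm_num
  | succ n ih =>
    intro k hk
    have hln1 : 1 ≤ ℓ ^ n := Nat.one_le_pow _ _ hℓ0
    obtain ⟨ε, k', hεℓ, hk'lt, hkdec⟩ :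
        ∃ ε k', ε < ℓ ∧ k' < ℓ ^ n ∧ k = ℓ ^ n * ε + k' := by
      refine ⟨k / ℓ ^ n, k % ℓ ^ n, ?_, Nat.mod_lt _ (by omega), (Nat.div_add_mod k (ℓ^n)).symm⟩
      have : k < ℓ ^ n * ℓ := by rw [← pow_succ]; exact hk
      exact Nat.div_lt_of_lt_mul this
    obtain ⟨k'', hk''⟩ : ∃ k'', k' + k'' + 1 = ℓ ^ n := ⟨ℓ ^ n - 1 - k', by omega⟩
    have hk''lt : k'' < ℓ ^ n := by omega
    obtain ⟨a', b', ha', hb', H'⟩ := ih k' hk'lt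
    obtain ⟨a'', b'', ha'', hb'', H''⟩ := ih k'' hk''lt
    refine ⟨p ε * a' + p (ε+ℓ) * b'', p ε * b' + p (ε+ℓ) * a'',
      add_nonneg (mul_nonneg (hp ε) ha') (mul_nonneg (hp (ε+ℓ)) hb''),
      add_nonneg (mul_nonneg (hp ε) hb') (mul_nonneg (hp (ε+ℓ)) ha''), fun c d hcp hd => ?_⟩
    have hLn : (0:ℝ) < (ℓ:ℝ)^n := by positivity
    have hkdecomp : (k:ℝ) = (ℓ:ℝ)^n * (ε:ℝ) + (k':ℝ) := by exact_mod_cast congrArg (Nat.cast : ℕ → ℝ) hkdec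
    have hk'cast : (k':ℝ) ≤ (ℓ:ℝ)^n - 1 := by
      have : ((k':ℕ):ℝ) + 1 ≤ ((ℓ:ℝ))^n := by exact_mod_cast hk'lt
      linarith
    have hk''cast : (k'':ℝ) = (ℓ:ℝ)^n - 1 - (k':ℝ) := by
      have : (k':ℝ) + (k'':ℝ) + 1 = (ℓ:ℝ)^n := by exact_mod_cast congrArg (Nat.cast : ℕ → ℝ) hk''
      linarith
    have hw : ∀ t : ℝ, ((k:ℝ)+t)/(ℓ:ℝ)^(n+1) = ((ε:ℝ) + ((k':ℝ)+t)/(ℓ:ℝ)^n)/(ℓ:ℝ) := by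
      intro t
      rw [hkdecomp, pow_succ]
      have h2 : (ε:ℝ) + ((k':ℝ)+t)/(ℓ:ℝ)^n = ((ℓ:ℝ)^n * (ε:ℝ) + ((k':ℝ) + t))/(ℓ:ℝ)^n := by
        rw [eq_div_iff hLn.ne', add_mul, div_mul_cancel₀ _ hLn.ne']
        ring
      rw [h2, div_div]
      congr 1
      ring
    have hwc0 : 0 ≤ ((k':ℝ)+c)/(ℓ:ℝ)^n :=
      div_nonneg (add_nonneg (Nat.cast_nonneg _) hcp) hLn.le
    have hwd1 : ((k':ℝ)+d)/(ℓ:ℝ)^n ≤ 1 := by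
      rw [div_le_one hLn]; linarith [hk'cast]
    obtain ⟨SIco, SIoc⟩ := stepA hℓ0 hself h0 h1 hc hεℓ hwc0 hwd1
    obtain ⟨H'1, H'2⟩ := H' c d hcp hd
    obtain ⟨H''1, H''2⟩ := H'' (1-d) (1-c) (by linarith) (by linarith)
    have hrc : ∀ t : ℝ, 1 - ((k':ℝ)+t)/(ℓ:ℝ)^n = ((k'':ℝ) + (1-t))/(ℓ:ℝ)^n := by
      intro t
      rw [hk''cast, eq_div_iff hLn.ne', sub_mul, div_mul_cancel₀ _ hLn.ne']
      ring
    have hIcoset : Set.Ico (1-(1-c)) (1-(1-d)) = Set.Ico c d := by norm_num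
    have hIocset : Set.Ioc (1-(1-c)) (1-(1-d)) = Set.Ioc c d := by norm_num
    rw [hrc d, hrc c] at SIco SIoc
    rw [hIcoset] at H''2
    rw [hIocset] at H''1
    constructor
    · rw [hw c, hw d, SIco, H'1, H''2]
      rw [ENNReal.ofReal_add (mul_nonneg (hp ε) ha') (mul_nonneg (hp (ε+ℓ)) hb''),
        ENNReal.ofReal_add (mul_nonneg (hp ε) hb') (mul_nonneg (hp (ε+ℓ)) ha''),
        ENNReal.ofReal_mul (hp ε), ENNReal.ofReal_mul (hp (ε+ℓ)),
        ENNReal.ofReal_mul (hp ε), ENNReal.ofReal_mul (hp (ε+ℓ))]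
      ring
    · rw [hw c, hw d, SIoc, H'2, H''1]
      rw [ENNReal.ofReal_add (mul_nonneg (hp ε) ha') (mul_nonneg (hp (ε+ℓ)) hb''),
        ENNReal.ofReal_add (mul_nonneg (hp ε) hb') (mul_nonneg (hp (ε+ℓ)) ha''),
        ENNReal.ofReal_mul (hp ε), ENNReal.ofReal_mul (hp (ε+ℓ)),
        ENNReal.ofReal_mul (hp ε), ENNReal.ofReal_mul (hp (ε+ℓ))]
      ring

lemma refl1_image_Ico (A B : ℝ) : refl1 '' Set.Ico A B = Set.Ioc (1-B) (1-A) := by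
  ext x
  simp only [Set.mem_image, Set.mem_Ico, Set.mem_Ioc, refl1]
  constructor
  · rintro ⟨y, ⟨hy1, hy2⟩, rfl⟩
    constructor <;> linarith
  · rintro ⟨hx1, hx2⟩
    exact ⟨1 - x, ⟨by linarith, by linarith⟩, by ring⟩

end Stmt7Aux

open Stmt7Aux

/-- For every ℓ-adic interval `I`, either `μ(I)μ(J) ≤ 2μ(IJ)` for all `J`, or
`μ(I)μ(T(J)) ≤ 2μ(IJ)` for all `J`. -/
theorem stmt7 (ℓ : ℕ) (hℓ : 2 ≤ ℓ) (p : ℕ → ℝ) (hp : ∀ i, 0 ≤ p i)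
    (hsum : ∑ i ∈ Finset.range (2 * ℓ), p i = 1)
    (hpos : ∀ i < ℓ, 0 < p i + p (i + ℓ))
    (μ : Measure ℝ) [IsProbabilityMeasure μ]
    (hself : μ = ∑ i ∈ Finset.range (2 * ℓ), ENNReal.ofReal (p i) • μ.map (simMapT ℓ i))
    (n k : ℕ) (hk : k < ℓ ^ n) :
    (∀ (q m : ℕ), m < ℓ ^ q →
        mss μ (adicI ℓ n k) * mss μ (adicI ℓ q m) ≤
          2 * mss μ (adicI ℓ (n + q) (k * ℓ ^ q + m))) ∨
      (∀ (q m : ℕ), m < ℓ ^ q →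
        mss μ (adicI ℓ n k) * mss μ (refl1 '' adicI ℓ q m) ≤
          2 * mss μ (adicI ℓ (n + q) (k * ℓ ^ q + m))) := by
  have hℓ0 : 0 < ℓ := by omega
  have hL : (0:ℝ) < (ℓ:ℝ) := by exact_mod_cast hℓ0
  have hc := supp01 hℓ hp hsum hself
  obtain ⟨h0, h1⟩ := atoms hℓ hp hsum hpos hself hc
  obtain ⟨a, b, ha, hb, H⟩ := mainInd hℓ0 hp hself h0 h1 hc n k hk
  -- μ(Ico 0 1) = 1 and μ(Ioc 0 1) = 1
  have hIco01 : μ (Set.Ico (0:ℝ) 1) = 1 := by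
    have hnull : μ (Set.Ico (0:ℝ) 1)ᶜ = 0 := by
      refine nullsub h0 h1 hc ?_
      rintro x ⟨hx1, hx2, hx3⟩
      simp only [Set.mem_compl_iff, Set.mem_Ico, not_and_or, not_le, not_lt] at hx1
      simp only [Set.mem_insert_iff, Set.mem_singleton_iff]
      rcases hx1 with h | h
      · exfalso; linarith
      · right; linarith
    refine le_antisymm prob_le_one ?_
    calc (1:ℝ≥0∞) = μ Set.univ := (measure_univ).symm
      _ ≤ μ (Set.Ico (0:ℝ) 1) + μ (Set.Ico (0:ℝ) 1)ᶜ := by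
          rw [← Set.union_compl_self (Set.Ico (0:ℝ) 1)] at *
          exact measure_union_le _ _
      _ = μ (Set.Ico (0:ℝ) 1) := by rw [hnull, add_zero]
  have hIoc01 : μ (Set.Ioc (0:ℝ) 1) = 1 := by
    have hnull : μ (Set.Ioc (0:ℝ) 1)ᶜ = 0 := by
      refine nullsub h0 h1 hc ?_
      rintro x ⟨hx1, hx2, hx3⟩
      simp only [Set.mem_compl_iff, Set.mem_Ioc, not_and_or, not_le, not_lt] at hx1
      simp only [Set.mem_insert_iff, Set.mem_singleton_iff]
      rcases hx1 with h | h
      · left; linarith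
      · exfalso; linarith
    refine le_antisymm prob_le_one ?_
    calc (1:ℝ≥0∞) = μ Set.univ := (measure_univ).symm
      _ ≤ μ (Set.Ioc (0:ℝ) 1) + μ (Set.Ioc (0:ℝ) 1)ᶜ := by
          rw [← Set.union_compl_self (Set.Ioc (0:ℝ) 1)] at *
          exact measure_union_le _ _
      _ = μ (Set.Ioc (0:ℝ) 1) := by rw [hnull, add_zero]
  -- mass of I is a + b
  have hI : mss μ (adicI ℓ n k) = a + b := by
    have h01 := (H 0 1 le_rfl le_rfl).1
    rw [hIco01] at h01
    have : Set.Ioc (1-(1:ℝ)) (1-(0:ℝ)) = Set.Ioc (0:ℝ) 1 := by norm_num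
    rw [this, hIoc01, mul_one, mul_one] at h01
    have hset : adicI ℓ n k = Set.Ico (((k:ℝ)+0)/(ℓ:ℝ)^n) (((k:ℝ)+1)/(ℓ:ℝ)^n) := by
      unfold adicI; norm_num
    rw [mss, hset, h01, ENNReal.toReal_add ENNReal.ofReal_ne_top ENNReal.ofReal_ne_top,
      ENNReal.toReal_ofReal ha, ENNReal.toReal_ofReal hb]
  -- main identity for concatenations
  have hIJ : ∀ q m : ℕ, m < ℓ ^ q →
      mss μ (adicI ℓ (n + q) (k * ℓ ^ q + m)) =
        a * mss μ (adicI ℓ q m) + b * mss μ (refl1 '' adicI ℓ q m) := by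
    intro q m hm
    have hLq : (0:ℝ) < (ℓ:ℝ)^q := by positivity
    set c : ℝ := (m:ℝ)/(ℓ:ℝ)^q with hc_def
    set d : ℝ := ((m:ℝ)+1)/(ℓ:ℝ)^q with hd_def
    have hcp : 0 ≤ c := div_nonneg (Nat.cast_nonneg _) hLq.le
    have hd1 : d ≤ 1 := by
      rw [hd_def, div_le_one hLq]
      have : ((m:ℕ):ℝ) + 1 ≤ ((ℓ:ℝ))^q := by exact_mod_cast hm
      linarith
    have key := (H c d hcp hd1).1
    have hset : adicI ℓ (n + q) (k * ℓ ^ q + m)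
        = Set.Ico (((k:ℝ)+c)/(ℓ:ℝ)^n) (((k:ℝ)+d)/(ℓ:ℝ)^n) := by
      have e1 : ((k:ℝ)+c)/(ℓ:ℝ)^n = ((k:ℝ) * (ℓ:ℝ)^q + (m:ℝ)) / (ℓ:ℝ)^(n+q) := by
        rw [hc_def, pow_add, div_eq_div_iff (by positivity) (by positivity)]
        field_simp
      have e2 : ((k:ℝ)+d)/(ℓ:ℝ)^n = ((k:ℝ) * (ℓ:ℝ)^q + (m:ℝ) + 1) / (ℓ:ℝ)^(n+q) := by
        rw [hd_def, pow_add, div_eq_div_iff (by positivity) (by positivity)]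
        field_simp
        ring
      unfold adicI
      push_cast
      rw [e1, e2]
    have himg : refl1 '' adicI ℓ q m = Set.Ioc (1-d) (1-c) := by
      unfold adicI
      rw [refl1_image_Ico]
    have hJ : adicI ℓ q m = Set.Ico c d := rfl
    have fin1 : ENNReal.ofReal a * μ (Set.Ico c d) ≠ ⊤ :=
      ENNReal.mul_ne_top ENNReal.ofReal_ne_top (measure_ne_top μ _)
    have fin2 : ENNReal.ofReal b * μ (Set.Ioc (1-d) (1-c)) ≠ ⊤ :=
      ENNReal.mul_ne_top ENNReal.ofReal_ne_top (measure_ne_top μ _)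
    simp only [mss]
    rw [hset, key, himg, hJ, ENNReal.toReal_add fin1 fin2, ENNReal.toReal_mul,
      ENNReal.toReal_mul, ENNReal.toReal_ofReal ha, ENNReal.toReal_ofReal hb]
  -- conclude
  rcases le_total b a with hba | hab
  · left
    intro q m hm
    have hX : 0 ≤ mss μ (adicI ℓ q m) := ENNReal.toReal_nonneg
    have hY : 0 ≤ mss μ (refl1 '' adicI ℓ q m) := ENNReal.toReal_nonneg
    rw [hI, hIJ q m hm]
    nlinarith
  · right
    intro q m hm
    have hX : 0 ≤ mss μ (adicI ℓ q m) := ENNReal.toReal_nonneg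
    have hY : 0 ≤ mss μ (refl1 '' adicI ℓ q m) := ENNReal.toReal_nonneg
    rw [hI, hIJ q m hm]
    nlinarith
end
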